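/- Let A be a commutative affine Poisson ℂ-algebra and B ⊆ A a Poisson subalgebra such that A is a finite B-module. Then rank(A) = rank(B), where rank of a Poisson algebra is the maximum over points x of Maxspec of the rank of the Poisson structure matrix at x. -/

import Mathlib

set_option linter.unusedSectionVars false

namespace PoissonRankAux

variable {A : Type*} [CommRing A] [Algebra ℂ A]

section Bracket

variable (P : A → A → A)
variable (hadd : ∀ x y z : A, P (x + y) z = P x z + P y z)
variable (hsmul : ∀ (c : ℂ) (x y : A), P (c • x) y = c • P x y)
variable (hanti : ∀ x y : A, P x y = - P y x)
variable (hleib : ∀ x y z : A, P x (y * z) = P x y * z + y * P x z)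

theorem P_add2 (hadd : ∀ x y z : A, P (x + y) z = P x z + P y z)
    (hanti : ∀ x y : A, P x y = - P y x) (z x y : A) :
    P z (x + y) = P z x + P z y := by
  rw [hanti, hadd, hanti x z, hanti y z]; ring

theorem P_one2 (hleib : ∀ x y z : A, P x (y * z) = P x y * z + y * P x z) (z : A) :
    P z 1 = 0 := by
  have h := hleib z 1 1
  simp only [mul_one, one_mul] at h
  exact add_eq_right.mp h.symm

theorem P_one1 (hanti : ∀ x y : A, P x y = - P y x)
    (hleib : ∀ x y z : A, P x (y * z) = P x y * z + y * P x z) (z : A) :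
    P 1 z = 0 := by
  rw [hanti, P_one2 P hleib, neg_zero]

theorem P_leib1 (hanti : ∀ x y : A, P x y = - P y x)
    (hleib : ∀ x y z : A, P x (y * z) = P x y * z + y * P x z) (x y z : A) :
    P (x * y) z = P x z * y + x * P y z := by
  rw [hanti, hleib, hanti z x, hanti z y]; ring

theorem P_algebraMap1 (hsmul : ∀ (c : ℂ) (x y : A), P (c • x) y = c • P x y)
    (hanti : ∀ x y : A, P x y = - P y x)
    (hleib : ∀ x y z : A, P x (y * z) = P x y * z + y * P x z) (r : ℂ) (z : A) :
    P (algebraMap ℂ A r) z = 0 := by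
  have : algebraMap ℂ A r = r • (1 : A) := Algebra.algebraMap_eq_smul_one r
  rw [this, hsmul, P_one1 P hanti hleib, smul_zero]

theorem P_zero1 (hadd : ∀ x y z : A, P (x + y) z = P x z + P y z) (z : A) :
    P 0 z = 0 := by
  have h := hadd 0 0 z
  rw [add_zero] at h
  exact add_eq_right.mp h.symm

end Bracket

section Vec

variable {K : Type*} [Field K]
variable (P : A → A → A) (π : A →+* K) {s : ℕ} (dd : Fin s → A)

/-- the "Hamiltonian vector" of `c` at the point/prime corresponding to `π`,
in coordinates given by the family `dd`. -/
def vecP (c : A) : Fin s → K := fun j => π (P c (dd j))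

theorem vecP_add (hadd : ∀ x y z : A, P (x + y) z = P x z + P y z) (c c' : A) :
    vecP P π dd (c + c') = vecP P π dd c + vecP P π dd c' := by
  funext j; simp [vecP, hadd, map_add]

theorem vecP_mul (hanti : ∀ x y : A, P x y = - P y x)
    (hleib : ∀ x y z : A, P x (y * z) = P x y * z + y * P x z) (c c' : A) :
    vecP P π dd (c * c') = π c • vecP P π dd c' + π c' • vecP P π dd c := by
  funext j
  simp only [vecP, P_leib1 P hanti hleib, map_add, map_mul, Pi.add_apply, Pi.smul_apply,
    smul_eq_mul]
  ring

theorem vecP_one (hanti : ∀ x y : A, P x y = - P y x)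
    (hleib : ∀ x y z : A, P x (y * z) = P x y * z + y * P x z) :
    vecP P π dd 1 = 0 := by
  funext j; simp [vecP, P_one1 P hanti hleib]

theorem vecP_algebraMap (hsmul : ∀ (c : ℂ) (x y : A), P (c • x) y = c • P x y)
    (hanti : ∀ x y : A, P x y = - P y x)
    (hleib : ∀ x y z : A, P x (y * z) = P x y * z + y * P x z) (r : ℂ) :
    vecP P π dd (algebraMap ℂ A r) = 0 := by
  funext j; simp [vecP, P_algebraMap1 P hsmul hanti hleib]

theorem vecP_pow (hanti : ∀ x y : A, P x y = - P y x)
    (hleib : ∀ x y z : A, P x (y * z) = P x y * z + y * P x z) (c : A) :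
    ∀ i : ℕ, vecP P π dd (c ^ (i + 1)) = (((i + 1 : ℕ) : K) * π c ^ i) • vecP P π dd c := by
  intro i
  induction i with
  | zero => simp
  | succ i ih =>
      have : c ^ (i + 2) = c * c ^ (i + 1) := by ring
      rw [this, vecP_mul P π dd hanti hleib, ih, map_pow]
      funext j
      simp only [Pi.add_apply, Pi.smul_apply, smul_eq_mul]
      push_cast
      ring

/-- additivity packaged as an `AddMonoidHom`, to get `map_sum`. -/
def vecPHom (hadd : ∀ x y z : A, P (x + y) z = P x z + P y z) : A →+ (Fin s → K) :=
  AddMonoidHom.mk' (vecP P π dd) (vecP_add P π dd hadd)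

theorem vecP_sum (hadd : ∀ x y z : A, P (x + y) z = P x z + P y z)
    {ι : Type*} (t : Finset ι) (h : ι → A) :
    vecP P π dd (∑ i ∈ t, h i) = ∑ i ∈ t, vecP P π dd (h i) :=
  map_sum (vecPHom P π dd hadd) h t

/-- generator-span lemma: the Hamiltonian vector of any element of the subalgebra
generated by `S` lies in the span of Hamiltonian vectors of elements of `S`. -/
theorem vecP_mem_span
    (hadd : ∀ x y z : A, P (x + y) z = P x z + P y z)
    (hsmul : ∀ (c : ℂ) (x y : A), P (c • x) y = c • P x y)
    (hanti : ∀ x y : A, P x y = - P y x)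
    (hleib : ∀ x y z : A, P x (y * z) = P x y * z + y * P x z)
    (S : Set A) {c : A} (hc : c ∈ Algebra.adjoin ℂ S) :
    vecP P π dd c ∈ Submodule.span K (vecP P π dd '' S) := by
  induction hc using Algebra.adjoin_induction with
  | mem x hx => exact Submodule.subset_span ⟨x, hx, rfl⟩
  | algebraMap r =>
      rw [vecP_algebraMap P π dd hsmul hanti hleib]; exact Submodule.zero_mem _
  | add x y hx hy ihx ihy =>
      rw [vecP_add P π dd hadd]; exact Submodule.add_mem _ ihx ihy
  | mul x y hx hy ihx ihy =>
      rw [vecP_mul P π dd hanti hleib]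
      exact Submodule.add_mem _ (Submodule.smul_mem _ _ ihy) (Submodule.smul_mem _ _ ihx)

end Vec




/-- weak Nullstellensatz style point existence: a non-nilpotent element of an affine
complex algebra does not vanish at some ℂ-point. -/
theorem exists_point [Algebra.FiniteType ℂ A] (d : A) (hd : ¬ IsNilpotent d) :
    ∃ x : A →ₐ[ℂ] ℂ, x d ≠ 0 := by
  obtain ⟨n, f, hf⟩ := Algebra.FiniteType.iff_quotient_mvPolynomial''.mp ‹Algebra.FiniteType ℂ A›
  obtain ⟨D, hD⟩ := hf d
  have hpt : ∃ v ∈ MvPolynomial.zeroLocus ℂ (RingHom.ker f), MvPolynomial.eval v D ≠ 0 := by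
    by_contra hcon
    push_neg at hcon
    have hmem : D ∈ MvPolynomial.vanishingIdeal ℂ (MvPolynomial.zeroLocus ℂ (RingHom.ker f)) := by
      rw [MvPolynomial.mem_vanishingIdeal_iff]
      exact hcon
    rw [MvPolynomial.vanishingIdeal_zeroLocus_eq_radical] at hmem
    obtain ⟨N, hN⟩ := hmem
    apply hd
    refine ⟨N, ?_⟩
    have : f (D ^ N) = 0 := hN
    rwa [map_pow, hD] at this
  obtain ⟨v, hv, hvD⟩ := hpt
  let ψ : MvPolynomial (Fin n) ℂ →ₐ[ℂ] ℂ := MvPolynomial.aeval v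
  have hψ : ∀ q : MvPolynomial (Fin n) ℂ, ψ q = MvPolynomial.eval v q := by
    intro q
    rw [show ψ q = MvPolynomial.aeval v q from rfl, MvPolynomial.aeval_def,
      Algebra.algebraMap_self]
    rfl
  have hker : ∀ q ∈ RingHom.ker f, ψ q = 0 := by
    intro q hq
    rw [hψ]
    exact (MvPolynomial.mem_zeroLocus_iff.mp hv) q hq
  let e := Ideal.quotientKerAlgEquivOfSurjective hf
  let x : A →ₐ[ℂ] ℂ :=
    (Ideal.Quotient.liftₐ (RingHom.ker f) ψ hker).comp (e.symm : A →ₐ[ℂ] (_ ⧸ RingHom.ker f))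
  refine ⟨x, ?_⟩
  have hsymm : e.symm d = Ideal.Quotient.mk (RingHom.ker f) D := by
    rw [AlgEquiv.symm_apply_eq]
    have he : e (Ideal.Quotient.mk (RingHom.ker f) D) = f D := rfl
    rw [he, hD]
  show (Ideal.Quotient.liftₐ (RingHom.ker f) ψ hker) (e.symm d) ≠ 0
  rw [hsymm]
  have : (Ideal.Quotient.liftₐ (RingHom.ker f) ψ hker) (Ideal.Quotient.mk (RingHom.ker f) D)
      = ψ D := by
    simp
    rfl
  rw [this, hψ]
  exact hvD

/-- elements of a minimal prime are "nilpotent away from the prime". -/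
theorem exists_ann_pow {p : Ideal A} (hp : p ∈ minimalPrimes A) {x : A} (hx : x ∈ p) :
    ∃ s : A, s ∉ p ∧ ∃ n : ℕ, s * x ^ (n + 1) = 0 := by
  haveI hpp : p.IsPrime := hp.1.1
  let L := Localization.AtPrime p
  have hmem : algebraMap A L x ∈ nilradical L := by
    rw [nilradical_eq_sInf, Submodule.mem_sInf]
    intro Q hQ
    haveI hQp : Ideal.IsPrime Q := hQ
    have hcomap : Ideal.comap (algebraMap A L) Q ≤ p := by
      intro a ha
      by_contra hap
      have hu : IsUnit (algebraMap A L a) := IsLocalization.map_units L (⟨a, hap⟩ : p.primeCompl)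
      exact (Ideal.ne_top_iff_one Q).mp (Ideal.IsPrime.ne_top hQp)
        (by
          have := Ideal.mul_mem_left Q (↑hu.unit⁻¹) (Ideal.mem_comap.mp ha)
          rwa [IsUnit.val_inv_mul] at this)
    haveI hcp : Ideal.IsPrime (Ideal.comap (algebraMap A L) Q) := Ideal.IsPrime.comap _
    have hple : p ≤ Ideal.comap (algebraMap A L) Q :=
      hp.2 ⟨hcp, bot_le⟩ hcomap
    exact Ideal.mem_comap.mp (hple hx)
  obtain ⟨N, hN⟩ := mem_nilradical.mp hmem
  rw [← map_pow, IsLocalization.map_eq_zero_iff p.primeCompl] at hN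
  obtain ⟨m, hm⟩ := hN
  rcases N with _ | n
  · exfalso
    simp only [pow_zero, mul_one] at hm
    exact m.2 (hm ▸ p.zero_mem)
  · exact ⟨m, m.2, n, hm⟩

/-- Seidenberg: a derivation (additive + Leibniz) preserves minimal primes,
for algebras over ℂ. -/
theorem deriv_mem_of_minimal {p : Ideal A} (hp : p ∈ minimalPrimes A)
    (D : A → A) (Dadd : ∀ u v, D (u + v) = D u + D v)
    (Dleib : ∀ u v, D (u * v) = D u * v + u * D v) {x : A} (hx : x ∈ p) :
    D x ∈ p := by
  haveI hpp : p.IsPrime := hp.1.1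
  have D0 : D 0 = 0 := by
    have h := Dadd 0 0
    rw [add_zero] at h
    exact (add_eq_right.mp h.symm)
  have Dpow : ∀ (m : ℕ) (u : A), D (u ^ (m + 1)) = (m + 1 : ℕ) • (u ^ m * D u) := by
    intro m
    induction m with
    | zero => intro u; simp
    | succ m ih =>
        intro u
        have : u ^ (m + 2) = u * u ^ (m + 1) := by ring
        rw [this, Dleib, ih]
        simp only [succ_nsmul, smul_add, nsmul_eq_mul]
        push_cast
        ring
  have hcancel : ∀ (m : ℕ) (w : A), (m + 1 : ℕ) • w = 0 → w = 0 := by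
    intro m w hw
    have hunit : IsUnit ((m + 1 : ℕ) : A) := by
      rw [(map_natCast (algebraMap ℂ A) (m + 1)).symm]
      apply IsUnit.map
      exact isUnit_iff_ne_zero.mpr (Nat.cast_ne_zero.mpr (Nat.succ_ne_zero m))
    have : ((m + 1 : ℕ) : A) * w = 0 := by rwa [nsmul_eq_mul] at hw
    obtain ⟨un, hun⟩ := hunit
    calc w = (↑un⁻¹ * ↑un) * w := by rw [Units.inv_mul, one_mul]
      _ = ↑un⁻¹ * (((m + 1 : ℕ) : A) * w) := by rw [hun]; ring
      _ = 0 := by rw [this, mul_zero]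
  by_contra hDx
  -- key claim by strong induction on n
  have key : ∀ n : ℕ, ∀ s : A, s ∉ p → s * x ^ (n + 1) = 0 → False := by
    intro n
    induction n with
    | zero =>
        intro s hs h0
        -- D(s x) = Ds x + s Dx = 0 ; multiply by s : s² Dx = 0 since s x = 0... 
        have h1 : D (s * x ^ 1) = 0 := by rw [h0, D0]
        rw [Dleib] at h1
        rw [pow_one] at h0 h1
        have h2 : s * (D s * x + s * D x) = 0 := by rw [h1, mul_zero]
        have h3 : D s * (s * x) + s * s * D x = s * (D s * x + s * D x) := by ring
        have h4 : s * s * D x = 0 := by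
          rw [h0, mul_zero, zero_add] at h3
          rw [h3, h2]
        have : s * s * D x ∈ p := h4 ▸ p.zero_mem
        rcases hpp.mem_or_mem this with h | h
        · rcases hpp.mem_or_mem h with h' | h' <;> exact hs h'
        · exact hDx h
    | succ n ih =>
        intro s hs h0
        have h1 : D (s * x ^ (n + 2)) = 0 := by rw [h0, D0]
        rw [Dleib, Dpow (n + 1) x] at h1
        -- h1 : D s * x^(n+2) + s * ((n+2) • (x^(n+1) * D x)) = 0
        have h2 : s * (D s * x ^ (n + 2) + s * ((n + 2 : ℕ) • (x ^ (n + 1) * D x))) = 0 := by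
          rw [h1, mul_zero]
        have h3 : (n + 2 : ℕ) • (s * s * D x * x ^ (n + 1)) =
            s * (D s * x ^ (n + 2) + s * ((n + 2 : ℕ) • (x ^ (n + 1) * D x)))
              - D s * (s * x ^ (n + 2)) := by
          simp only [nsmul_eq_mul]
          ring
        rw [h2, h0, mul_zero, sub_zero] at h3
        have h4 : s * s * D x * x ^ (n + 1) = 0 := hcancel (n + 1) _ h3
        have hs' : s * s * D x ∉ p := by
          intro hmem
          rcases hpp.mem_or_mem hmem with h | h
          · rcases hpp.mem_or_mem h with h' | h' <;> exact hs h'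
          · exact hDx h
        exact ih (s * s * D x) hs' h4
  obtain ⟨s, hs, n, hann⟩ := exists_ann_pow hp hx
  exact key n s hs hann



theorem vecP_mem_span_B {K : Type*} [Field K]
    (P : A → A → A)
    (hadd : ∀ x y z : A, P (x + y) z = P x z + P y z)
    (hanti : ∀ x y : A, P x y = - P y x)
    (hleib : ∀ x y z : A, P x (y * z) = P x y * z + y * P x z)
    (B : Subalgebra ℂ A) [Module.Finite B A]
    {p : Ideal A} (hp : p ∈ minimalPrimes A)
    (π : A →+* K) (hker : RingHom.ker π = p)
    {s : ℕ} (dd : Fin s → A) (c : A) :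
    vecP P π dd c ∈ Submodule.span K (vecP P π dd '' (B : Set A)) := by
  classical
  set W := Submodule.span K (vecP P π dd '' (B : Set A)) with hW
  have hπp : ∀ z : A, π z = 0 ↔ z ∈ p := by
    intro z; rw [← hker, RingHom.mem_ker]
  have hvec_p : ∀ z ∈ p, vecP P π dd z = 0 := by
    intro z hz
    funext j
    have h1 : P (dd j) z ∈ p :=
      deriv_mem_of_minimal hp (fun t => P (dd j) t)
        (fun u v => P_add2 P hadd hanti (dd j) u v) (fun u v => hleib (dd j) u v) hz
    have h2 : P z (dd j) ∈ p := by
      rw [hanti]; exact p.neg_mem h1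
    have h3 : π (P z (dd j)) = 0 := (hπp _).mpr h2
    simpa [vecP] using h3
  have hvecB : ∀ b : A, b ∈ B → vecP P π dd b ∈ W := fun b hb =>
    Submodule.subset_span ⟨b, hb, rfl⟩
  haveI : Algebra.IsIntegral B A := Algebra.IsIntegral.of_finite B A
  have hint : IsIntegral B c := Algebra.IsIntegral.isIntegral c
  set θ : K := π c with hθ
  set L : Subfield K := Subfield.closure (π '' (B : Set A)) with hL
  -- fraction representation for members of L
  have hLrep : ∀ x : K, x ∈ L → ∃ a : A, a ∈ B ∧ ∃ b : A, b ∈ B ∧ π b ≠ 0 ∧ x * π b = π a := by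
    intro x hx
    rw [hL, Subfield.mem_closure_iff] at hx
    obtain ⟨y, hy, z, hz, hyz⟩ := hx
    have himg : π '' (B : Set A) = ↑(Subring.map π B.toSubring) := by
      rw [Subring.coe_map]; rfl
    rw [himg, Subring.closure_eq] at hy hz
    obtain ⟨a, ha, rfl⟩ := hy
    obtain ⟨b, hb, rfl⟩ := hz
    by_cases hbz : π b = 0
    · refine ⟨0, B.zero_mem, 1, B.one_mem, ?_, ?_⟩
      · rw [map_one]; exact one_ne_zero
      · rw [map_one, mul_one, map_zero, ← hyz, hbz, div_zero]
    · exact ⟨a, ha, b, hb, hbz, by rw [← hyz, div_mul_cancel₀ _ hbz]⟩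
  -- ring hom B →+* L
  let τ : B →+* L :=
    { toFun := fun b => ⟨π ↑b, Subfield.subset_closure ⟨↑b, b.2, rfl⟩⟩
      map_one' := by ext; simp
      map_mul' := by intro a b; ext; simp
      map_zero' := by ext; simp
      map_add' := by intro a b; ext; simp }
  have hcomm : (algebraMap L K).comp τ = π.comp (algebraMap B A) := by
    ext b; rfl
  have hθint : IsIntegral L θ := by
    obtain ⟨f, hfm, hfe⟩ := hint
    refine ⟨f.map τ, hfm.map τ, ?_⟩
    rw [Polynomial.eval₂_map, hcomm, ← Polynomial.hom_eval₂, hfe, map_zero]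
  -- characteristic zero
  haveI hKchar : CharZero K := by
    have hinj : Function.Injective (π.comp (algebraMap ℂ A)) := RingHom.injective _
    constructor
    intro a b hab
    have h2 : (π.comp (algebraMap ℂ A)) (a : ℂ) = (π.comp (algebraMap ℂ A)) (b : ℂ) := by
      simpa [map_natCast] using hab
    exact_mod_cast hinj h2
  haveI hLchar : CharZero L := by
    constructor
    intro a b h
    have h2 : ((a : ℕ) : K) = ((b : ℕ) : K) := by
      have := congrArg (L.subtype) h
      simpa [map_natCast] using this
    exact_mod_cast h2
  set m := minpoly L θ with hm
  set N := m.natDegree with hNdef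
  have hN : 0 < N := minpoly.natDegree_pos hθint
  -- denominators
  choose u hu v hv hvne hrel using fun i : ℕ => hLrep _ (m.coeff i).2
  set d : A := ∏ i ∈ Finset.range (N+1), v i with hd
  set g : ℕ → A := fun i => u i * ∏ j ∈ (Finset.range (N+1)).erase i, v j with hg
  have hgB : ∀ i, g i ∈ B := fun i =>
    mul_mem (hu i) (prod_mem fun j _ => hv j)
  have hπd : π d ≠ 0 := by
    rw [hd, map_prod]
    exact Finset.prod_ne_zero_iff.mpr fun i _ => hvne i
  have hgd : ∀ i ∈ Finset.range (N+1), π (g i) = ((m.coeff i : K)) * π d := by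
    intro i hi
    have hsplit : π (v i) * ∏ j ∈ (Finset.range (N+1)).erase i, π (v j)
        = ∏ j ∈ Finset.range (N+1), π (v j) :=
      Finset.mul_prod_erase _ (fun j => π (v j)) hi
    calc π (g i) = π (u i) * ∏ j ∈ (Finset.range (N+1)).erase i, π (v j) := by
          rw [hg]; rw [map_mul, map_prod]
      _ = ((m.coeff i : K) * π (v i)) * ∏ j ∈ (Finset.range (N+1)).erase i, π (v j) := by
          rw [hrel i]
      _ = (m.coeff i : K) * (π (v i) * ∏ j ∈ (Finset.range (N+1)).erase i, π (v j)) := by ring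
      _ = (m.coeff i : K) * π d := by rw [hsplit, hd, map_prod]
  set U : A := ∑ i ∈ Finset.range (N+1), g i * c ^ i with hU
  have hπU : π U = 0 := by
    have h1 : π U = ∑ i ∈ Finset.range (N+1), (m.coeff i : K) * π d * θ ^ i := by
      rw [hU, map_sum]
      apply Finset.sum_congr rfl
      intro i hi
      rw [map_mul, map_pow, hgd i hi, hθ]
    have h2 : Polynomial.aeval θ m = ∑ i ∈ Finset.range (N+1), (m.coeff i : K) * θ ^ i := by
      rw [Polynomial.aeval_eq_sum_range' (Nat.lt_succ_of_le (le_refl N)) θ]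
      apply Finset.sum_congr rfl
      intro i _
      rw [Algebra.smul_def]
      rfl
    have h3 : Polynomial.aeval θ m = 0 := minpoly.aeval L θ
    have h4 : ∑ i ∈ Finset.range (N+1), (m.coeff i : K) * π d * θ ^ i
        = π d * ∑ i ∈ Finset.range (N+1), (m.coeff i : K) * θ ^ i := by
      rw [Finset.mul_sum]
      apply Finset.sum_congr rfl
      intro i _
      ring
    rw [h1, h4, ← h2, h3, mul_zero]
  have hUp : U ∈ p := (hπp U).mp hπU
  have hvecU : vecP P π dd U = 0 := hvec_p U hUp
  have hvecpow : ∀ i : ℕ, vecP P π dd (c ^ (i+1)) = (((i+1:ℕ):K) * θ ^ i) • vecP P π dd c :=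
    fun i => by rw [vecP_pow P π dd hanti hleib c i, hθ]
  set S : K := ∑ i ∈ Finset.range N, π (g (i+1)) * (((i+1:ℕ):K) * θ ^ i) with hS
  have hexpand : (0 : Fin s → K) =
      (∑ i ∈ Finset.range (N+1), π (g i) • vecP P π dd (c ^ i))
      + ∑ i ∈ Finset.range (N+1), θ ^ i • vecP P π dd (g i) := by
    calc (0 : Fin s → K) = vecP P π dd U := hvecU.symm
      _ = ∑ i ∈ Finset.range (N+1), vecP P π dd (g i * c ^ i) := by
          rw [hU]; exact vecP_sum P π dd hadd _ _
      _ = ∑ i ∈ Finset.range (N+1),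
            (π (g i) • vecP P π dd (c ^ i) + π (c ^ i) • vecP P π dd (g i)) := by
          apply Finset.sum_congr rfl
          intro i _
          rw [vecP_mul P π dd hanti hleib]
      _ = _ := by
          rw [Finset.sum_add_distrib]
          congr 1
          apply Finset.sum_congr rfl
          intro i _
          rw [map_pow, hθ]
  have hfirst : (∑ i ∈ Finset.range (N+1), π (g i) • vecP P π dd (c ^ i))
      = S • vecP P π dd c := by
    rw [Finset.sum_range_succ' (fun i => π (g i) • vecP P π dd (c ^ i)) N]
    have h0 : π (g 0) • vecP P π dd (c ^ 0) = 0 := by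
      rw [pow_zero, vecP_one P π dd hanti hleib, smul_zero]
    rw [h0, add_zero, hS, Finset.sum_smul]
    apply Finset.sum_congr rfl
    intro i _
    rw [hvecpow i, smul_smul]
  -- S = π d * aeval θ (derivative m) ≠ 0
  have hNd : (Polynomial.derivative m).natDegree < N :=
    Polynomial.natDegree_derivative_lt hN.ne'
  have hSd : S = π d * Polynomial.aeval θ (Polynomial.derivative m) := by
    have hder : Polynomial.aeval θ (Polynomial.derivative m)
        = ∑ i ∈ Finset.range N, ((m.coeff (i+1) : K) * ((i : K) + 1)) * θ ^ i := by
      rw [Polynomial.aeval_eq_sum_range' hNd θ]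
      apply Finset.sum_congr rfl
      intro i _
      rw [Polynomial.coeff_derivative, Algebra.smul_def]
      push_cast
      rfl
    rw [hder, hS, Finset.mul_sum]
    apply Finset.sum_congr rfl
    intro i hi
    rw [hgd (i+1) (by simp at hi ⊢; omega)]
    push_cast
    ring
  have hS' : Polynomial.aeval θ (Polynomial.derivative m) ≠ 0 := by
    intro h0
    have hdvd := minpoly.dvd L θ h0
    have hm'ne : Polynomial.derivative m ≠ 0 := by
      intro hzero
      have hsep : m.Separable := (minpoly.irreducible hθint).separable
      rw [Polynomial.Separable, hzero] at hsep
      exact (Polynomial.not_isUnit_of_natDegree_pos m hN) (isCoprime_zero_right.mp hsep)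
    have hle := Polynomial.natDegree_le_of_dvd hdvd hm'ne
    rw [← hm] at hle
    omega
  have hSne : S ≠ 0 := by rw [hSd]; exact mul_ne_zero hπd hS'
  have hT : (∑ i ∈ Finset.range (N+1), θ ^ i • vecP P π dd (g i)) ∈ W :=
    Submodule.sum_mem _ fun i _ => Submodule.smul_mem _ _ (hvecB _ (hgB i))
  have hSw : S • vecP P π dd c ∈ W := by
    have heq : S • vecP P π dd c
        = -(∑ i ∈ Finset.range (N+1), θ ^ i • vecP P π dd (g i)) := by
      rw [hfirst] at hexpand
      exact eq_neg_of_add_eq_zero_left hexpand.symm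
    rw [heq]
    exact Submodule.neg_mem _ hT
  have hfin : vecP P π dd c = S⁻¹ • (S • vecP P π dd c) := by
    rw [smul_smul, inv_mul_cancel₀ hSne, one_smul]
  rw [hfin]
  exact Submodule.smul_mem _ _ hSw

section RankLemmas
open Matrix
variable {K : Type*} [Field K]

theorem rank_le_of_rows_mem_span {k l s : ℕ} (M : Matrix (Fin k) (Fin s) K)
    (N : Matrix (Fin l) (Fin s) K)
    (h : ∀ i, M i ∈ Submodule.span K (Set.range N)) : M.rank ≤ N.rank := by
  rw [Matrix.rank_eq_finrank_span_row, Matrix.rank_eq_finrank_span_row]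
  haveI : Module.Finite K (Submodule.span K (Set.range N)) :=
    FiniteDimensional.span_of_finite K (Set.finite_range N)
  apply Submodule.finrank_mono
  rw [Submodule.span_le]
  rintro _ ⟨i, rfl⟩
  exact h i

theorem rank_submatrix_le' {k l s t : ℕ} (M : Matrix (Fin k) (Fin s) K)
    (f : Fin l → Fin k) (g : Fin t → Fin s) :
    (M.submatrix f g).rank ≤ M.rank := by
  have h1 : (M.submatrix f (id : Fin s → Fin s)).rank ≤ M.rank := by
    apply rank_le_of_rows_mem_span
    intro i
    exact Submodule.subset_span ⟨f i, rfl⟩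
  have h2 : (M.submatrix f g).rank ≤ (M.submatrix f (id : Fin s → Fin s)).rank := by
    rw [← Matrix.rank_transpose (M.submatrix f g),
      ← Matrix.rank_transpose (M.submatrix f (id : Fin s → Fin s))]
    apply rank_le_of_rows_mem_span
    intro j
    refine Submodule.subset_span ⟨g j, ?_⟩
    funext i
    rfl
  exact h2.trans h1

theorem le_rank_of_submatrix_unit {k s r : ℕ} (M : Matrix (Fin k) (Fin s) K)
    (f : Fin r → Fin k) (g : Fin r → Fin s)
    (h : IsUnit (M.submatrix f g).det) : (r : ℕ) ≤ M.rank := by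
  have h1 : (M.submatrix f g).rank = r :=
    Matrix.rank_of_isUnit _ ((Matrix.isUnit_iff_isUnit_det _).mpr h) |>.trans
      (Fintype.card_fin r)
  calc (r : ℕ) = (M.submatrix f g).rank := h1.symm
    _ ≤ M.rank := rank_submatrix_le' M f g

/-- from a family spanning a space of finrank ≥ r, extract r independent members -/
theorem exists_indep_sub {V : Type*} [AddCommGroup V] [Module K V]
    {ι : Type*} [Fintype ι] (v : ι → V) {r : ℕ}
    (h : r ≤ Module.finrank K (Submodule.span K (Set.range v))) :
    ∃ g : Fin r → ι, LinearIndependent K (v ∘ g) := by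
  obtain ⟨b, hbsub, hbspan, hbind⟩ := exists_linearIndependent K (Set.range v)
  have hbfin : b.Finite := (Set.finite_range v).subset hbsub
  haveI : Fintype b := hbfin.fintype
  have hcard : r ≤ Fintype.card b := by
    have := finrank_span_set_eq_card hbind
    rw [hbspan] at this
    rw [← Set.toFinset_card]
    omega
  obtain ⟨e⟩ : Nonempty (Fin r ↪ b) := by
    apply Function.Embedding.nonempty_of_card_le
    simpa using hcard
  have hmem : ∀ t : Fin r, (e t : V) ∈ Set.range v := fun t => hbsub (e t).2
  choose g hg using hmem
  refine ⟨g, ?_⟩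
  have : v ∘ g = Subtype.val ∘ e := by
    funext t; simp [Function.comp, hg]
  rw [this]
  exact hbind.comp e e.injective

theorem exists_submatrix_unit_of_le_rank {k s r : ℕ} (M : Matrix (Fin k) (Fin s) K)
    (h : r ≤ M.rank) :
    ∃ (f : Fin r → Fin k) (g : Fin r → Fin s), IsUnit (M.submatrix f g).det := by
  -- extract r independent rows of X := Mᵀ, i.e. columns of M
  have hX : r ≤ Module.finrank K (Submodule.span K (Set.range Mᵀ)) := by
    calc r ≤ M.rank := h
      _ = Mᵀ.rank := (Matrix.rank_transpose M).symm
      _ = Module.finrank K (Submodule.span K (Set.range Mᵀ)) :=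
          Matrix.rank_eq_finrank_span_row Mᵀ
  obtain ⟨g, hg⟩ := exists_indep_sub Mᵀ hX
  set Y : Matrix (Fin r) (Fin k) K := (Mᵀ).submatrix g id with hY
  have hYrows : (fun t => Y t) = Mᵀ ∘ g := by funext t; rfl
  have hYrank : Y.rank = r := by
    have := (hYrows ▸ hg : LinearIndependent K fun t => Y t).rank_matrix
    rw [Fintype.card_fin] at this
    exact this
  have hYt : r ≤ Module.finrank K (Submodule.span K (Set.range Yᵀ)) := by
    have h' := Matrix.rank_eq_finrank_span_row Yᵀ
    rw [Matrix.rank_transpose, hYrank] at h'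
    exact h'.le
  obtain ⟨f, hf⟩ := exists_indep_sub Yᵀ hYt
  refine ⟨f, g, ?_⟩
  have hZ : LinearIndependent K (fun t => (M.submatrix f g) t) := by
    have : (fun t => (M.submatrix f g) t) = Yᵀ ∘ f := by
      funext t; funext t'; rfl
    rw [this]; exact hf
  exact (Matrix.isUnit_iff_isUnit_det _).mp
    (Matrix.linearIndependent_rows_iff_isUnit.mp hZ)



end RankLemmas

section Chain

open Matrix

variable {K : Type*} [Field K]

theorem rank_step (P : A → A → A) (π : A →+* K)
    {q q' s : ℕ} (cc : Fin q → A) (cc' : Fin q' → A) (dd : Fin s → A)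
    (h : ∀ i, vecP P π dd (cc i) ∈ Submodule.span K (vecP P π dd '' Set.range cc')) :
    (Matrix.of fun i j => π (P (cc i) (dd j))).rank
      ≤ (Matrix.of fun i j => π (P (cc' i) (dd j))).rank := by
  apply rank_le_of_rows_mem_span
  intro i
  have himg : vecP P π dd '' Set.range cc'
      = Set.range (Matrix.of fun i j => π (P (cc' i) (dd j))) := by
    rw [← Set.range_comp]; rfl
  rw [← himg]
  exact h i

theorem rank_flip (P : A → A → A)
    (hanti : ∀ x y : A, P x y = - P y x) (π : A →+* K)
    {q s : ℕ} (cc : Fin q → A) (dd : Fin s → A) :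
    (Matrix.of fun i j => π (P (cc i) (dd j))).rank
      = (Matrix.of fun j i => π (P (dd j) (cc i))).rank := by
  have hunit : IsUnit (-(1 : Matrix (Fin q) (Fin q) K)).det := by
    apply isUnit_iff_ne_zero.mpr
    rw [Matrix.det_neg, Matrix.det_one, mul_one]
    exact pow_ne_zero _ (neg_ne_zero.mpr one_ne_zero)
  have heq : (Matrix.of fun j i => π (P (dd j) (cc i)))
      = ((Matrix.of fun i j => π (P (cc i) (dd j)))ᵀ) * (-(1 : Matrix (Fin q) (Fin q) K)) := by
    rw [Matrix.mul_neg, Matrix.mul_one]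
    ext j i
    show π (P (dd j) (cc i)) = -((Matrix.of fun i j => π (P (cc i) (dd j)))ᵀ j i)
    rw [hanti]
    show π (- P (cc i) (dd j)) = _
    rw [map_neg]
    rfl
  rw [heq, Matrix.rank_mul_eq_left_of_isUnit_det _ _ hunit, Matrix.rank_transpose]

end Chain

end PoissonRankAux

open PoissonRankAux in
/-- For a Poisson subalgebra `B ⊆ A` of affine complex Poisson algebras with `A` a
finite `B`-module, `rank A = rank B`: the maximum over points of the rank of the
Poisson structure matrix is the same for `A` and for `B` (for any generating families). -/
theorem poisson_rank_eq_of_finite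
    {A : Type*} [CommRing A] [Algebra ℂ A] [Algebra.FiniteType ℂ A]
    (P : A → A → A)
    (hadd : ∀ x y z : A, P (x + y) z = P x z + P y z)
    (hsmul : ∀ (c : ℂ) (x y : A), P (c • x) y = c • P x y)
    (hanti : ∀ x y : A, P x y = - P y x)
    (hjac : ∀ x y z : A, P x (P y z) + P y (P z x) + P z (P x y) = 0)
    (hleib : ∀ x y z : A, P x (y * z) = P x y * z + y * P x z)
    (B : Subalgebra ℂ A)
    (hBP : ∀ x y : A, x ∈ B → y ∈ B → P x y ∈ B)
    [Module.Finite B A] :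
    ∀ (n : ℕ) (aa : Fin n → A), Algebra.adjoin ℂ (Set.range aa) = ⊤ →
    ∀ (m : ℕ) (bb : Fin m → B), Algebra.adjoin ℂ (Set.range bb) = ⊤ →
      sSup {k : ℕ | ∃ x : A →ₐ[ℂ] ℂ,
          (Matrix.of fun i j : Fin n => x (P (aa i) (aa j))).rank = k}
        = sSup {k : ℕ | ∃ y : B →ₐ[ℂ] ℂ,
            (Matrix.of fun i j : Fin m =>
              y ⟨P (bb i) (bb j), hBP _ _ (bb i).2 (bb j).2⟩).rank = k} := by
  intro n aa haa m bb hbb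
  classical
  set SA := {k : ℕ | ∃ x : A →ₐ[ℂ] ℂ,
      (Matrix.of fun i j : Fin n => x (P (aa i) (aa j))).rank = k} with hSAdef
  set SB := {k : ℕ | ∃ y : B →ₐ[ℂ] ℂ,
      (Matrix.of fun i j : Fin m =>
        y ⟨P (bb i) (bb j), hBP _ _ (bb i).2 (bb j).2⟩).rank = k} with hSBdef
  have hSAbdd : BddAbove SA := by
    refine ⟨n, ?_⟩
    rintro k ⟨x, rfl⟩
    exact Matrix.rank_le_width _
  have hSBbdd : BddAbove SB := by
    refine ⟨m, ?_⟩
    rintro k ⟨y, rfl⟩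
    exact Matrix.rank_le_width _
  set cc : Fin m → A := fun i => ((bb i : A)) with hcc
  have hccB : ∀ b : A, b ∈ B → b ∈ Algebra.adjoin ℂ (Set.range cc) := by
    intro b hb
    have h1 : Algebra.adjoin ℂ (Set.range cc)
        = Subalgebra.map B.val (Algebra.adjoin ℂ (Set.range bb)) := by
      rw [AlgHom.map_adjoin]
      congr 1
      rw [← Set.range_comp]
      rfl
    rw [h1, hbb]
    exact Subalgebra.mem_map.mpr ⟨⟨b, hb⟩, Algebra.mem_top, rfl⟩
  -- every element's vec lies in span of vecs of generators of A
  have hallA : ∀ {KK : Type} [Field KK] (π : A →+* KK) {s : ℕ} (dd : Fin s → A) (c0 : A),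
      vecP P π dd c0 ∈ Submodule.span KK (vecP P π dd '' Set.range aa) := by
    intro KK _ π s dd c0
    exact vecP_mem_span P π dd hadd hsmul hanti hleib _ (by rw [haa]; exact Algebra.mem_top)
  -- direction 1 : sSup SA ≤ sSup SB
  have dir1 : sSup SA ≤ sSup SB := by
    rcases Set.eq_empty_or_nonempty SA with hSAe | hSAne
    · rw [hSAe, csSup_empty]
      exact Nat.zero_le _
    refine csSup_le hSAne ?_
    rintro k ⟨x, hxrank⟩
    -- extract a k-minor of the matrix at x, with nonvanishing determinant
    obtain ⟨f, g, hfg⟩ :=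
      exists_submatrix_unit_of_le_rank (Matrix.of fun i j : Fin n => x (P (aa i) (aa j)))
        (le_of_eq hxrank.symm)
    set D : A := ((Matrix.of fun i j : Fin n => P (aa i) (aa j)).submatrix f g).det with hD
    have hxD : x D ≠ 0 := by
      have hmap : x.toRingHom D
          = ((Matrix.of fun i j : Fin n => x (P (aa i) (aa j))).submatrix f g).det :=
        RingHom.map_det x.toRingHom _
      rw [show x D = x.toRingHom D from rfl, hmap]
      exact hfg.ne_zero
    -- minimal prime below ker x
    haveI hkerprime : (RingHom.ker x.toRingHom).IsPrime := RingHom.ker_isPrime _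
    obtain ⟨p, hpmin, hple⟩ :=
      Ideal.exists_minimalPrimes_le (bot_le : (⊥ : Ideal A) ≤ RingHom.ker x.toRingHom)
    haveI hpp : p.IsPrime := hpmin.1.1
    -- fraction field of A/p
    let R := A ⧸ p
    let K := FractionRing R
    let π : A →+* K := (algebraMap R K).comp (Ideal.Quotient.mk p)
    have hker : RingHom.ker π = p := by
      ext z
      constructor
      · intro hz
        have h1 : algebraMap R K (Ideal.Quotient.mk p z) = 0 := hz
        have h2 : Ideal.Quotient.mk p z = 0 := by
          apply IsFractionRing.injective R K
          rw [h1, map_zero]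
        exact Ideal.Quotient.eq_zero_iff_mem.mp h2
      · intro hz
        show algebraMap R K (Ideal.Quotient.mk p z) = 0
        rw [Ideal.Quotient.eq_zero_iff_mem.mpr hz, map_zero]
    have hπp : ∀ z : A, π z = 0 ↔ z ∈ p := fun z => by rw [← RingHom.mem_ker, hker]
    have hπD : π D ≠ 0 := by
      intro h0
      have : D ∈ p := (hπp D).mp h0
      have : D ∈ RingHom.ker x.toRingHom := hple this
      exact hxD this
    -- rank over K of the matrix at π is ≥ k
    have hk1 : k ≤ (Matrix.of fun i j : Fin n => π (P (aa i) (aa j))).rank := by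
      apply le_rank_of_submatrix_unit _ f g
      apply isUnit_iff_ne_zero.mpr
      have hmap : π D
          = ((Matrix.of fun i j : Fin n => π (P (aa i) (aa j))).submatrix f g).det :=
        RingHom.map_det π _
      rw [← hmap]
      exact hπD
    -- chain down to the generators of B
    have hallB : ∀ {s : ℕ} (dd : Fin s → A) (c0 : A),
        vecP P π dd c0 ∈ Submodule.span K (vecP P π dd '' Set.range cc) := by
      intro s dd c0
      have h1 := vecP_mem_span_B P hadd hanti hleib B hpmin π hker dd c0
      refine Submodule.span_le.mpr ?_ h1
      rintro _ ⟨b, hb, rfl⟩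
      exact vecP_mem_span P π dd hadd hsmul hanti hleib _ (hccB b hb)
    have hstep1 : (Matrix.of fun i j : Fin n => π (P (aa i) (aa j))).rank
        ≤ (Matrix.of fun i j => π (P (cc i) (aa j))).rank :=
      rank_step P π aa cc aa (fun i => hallB aa (aa i))
    have hflip : (Matrix.of fun i j => π (P (cc i) (aa j))).rank
        = (Matrix.of fun j i => π (P (aa j) (cc i))).rank :=
      rank_flip P hanti π cc aa
    have hstep2 : (Matrix.of fun j i => π (P (aa j) (cc i))).rank
        ≤ (Matrix.of fun i j => π (P (cc i) (cc j))).rank :=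
      rank_step P π aa cc cc (fun j => hallB cc (aa j))
    have hk2 : k ≤ (Matrix.of fun i j => π (P (cc i) (cc j))).rank :=
      hk1.trans (hstep1.trans (hflip.le.trans hstep2))
    -- extract a k-minor of the matrix over K for the generators of B
    obtain ⟨f', g', hfg'⟩ :=
      exists_submatrix_unit_of_le_rank (Matrix.of fun i j => π (P (cc i) (cc j))) hk2
    set MB : Matrix (Fin m) (Fin m) B :=
      Matrix.of fun i j => (⟨P (bb i) (bb j), hBP _ _ (bb i).2 (bb j).2⟩ : B) with hMB
    set E : B := ((MB.submatrix f' g').det) with hE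
    have hπE : π (E : A)
        = ((Matrix.of fun i j => π (P (cc i) (cc j))).submatrix f' g').det := by
      have h1 := RingHom.map_det (π.comp B.val.toRingHom) (MB.submatrix f' g')
      exact h1
    have hEnp : ¬ IsNilpotent ((E : A)) := by
      rintro ⟨t, ht⟩
      have hmemp : (E : A) ∈ p := hpp.mem_of_pow_mem t (ht ▸ p.zero_mem)
      have : π (E : A) = 0 := (hπp _).mpr hmemp
      rw [hπE] at this
      exact hfg'.ne_zero this
    obtain ⟨x', hx'E⟩ := exists_point (E : A) hEnp
    set y : B →ₐ[ℂ] ℂ := x'.comp B.val with hy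
    have hky : k ≤ (Matrix.of fun i j : Fin m =>
        y ⟨P (bb i) (bb j), hBP _ _ (bb i).2 (bb j).2⟩).rank := by
      apply le_rank_of_submatrix_unit _ f' g'
      apply isUnit_iff_ne_zero.mpr
      have h1 : x' (E : A) = ((Matrix.of fun i j : Fin m =>
          y ⟨P (bb i) (bb j), hBP _ _ (bb i).2 (bb j).2⟩).submatrix f' g').det := by
        have h2 := RingHom.map_det (x'.toRingHom.comp B.val.toRingHom) (MB.submatrix f' g')
        exact h2
      rw [← h1]
      exact hx'E
    refine hky.trans (le_csSup hSBbdd ?_)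
    exact ⟨y, rfl⟩
  -- direction 2 : sSup SB ≤ sSup SA
  have dir2 : sSup SB ≤ sSup SA := by
    rcases Set.eq_empty_or_nonempty SB with hSBe | hSBne
    · rw [hSBe, csSup_empty]
      exact Nat.zero_le _
    refine csSup_le hSBne ?_
    rintro k ⟨y, hyrank⟩
    obtain ⟨f, g, hfg⟩ :=
      exists_submatrix_unit_of_le_rank (Matrix.of fun i j : Fin m =>
        y ⟨P (bb i) (bb j), hBP _ _ (bb i).2 (bb j).2⟩) (le_of_eq hyrank.symm)
    set MB : Matrix (Fin m) (Fin m) B :=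
      Matrix.of fun i j => (⟨P (bb i) (bb j), hBP _ _ (bb i).2 (bb j).2⟩ : B) with hMB
    set E : B := ((MB.submatrix f g).det) with hE
    have hyE : y E ≠ 0 := by
      have h1 : y E = ((Matrix.of fun i j : Fin m =>
          y ⟨P (bb i) (bb j), hBP _ _ (bb i).2 (bb j).2⟩).submatrix f g).det :=
        RingHom.map_det y.toRingHom _
      rw [h1]
      exact hfg.ne_zero
    have hEnp : ¬ IsNilpotent ((E : A)) := by
      rintro ⟨t, ht⟩
      have h1 : ((E ^ t : B) : A) = 0 := by
        push_cast
        exact ht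
      have h2 : (E ^ t : B) = 0 := Subtype.coe_injective h1
      have h3 : (y E) ^ t = 0 := by
        rw [← map_pow, h2, map_zero]
      exact hyE (pow_eq_zero_iff'.mp h3).1
    obtain ⟨x', hx'E⟩ := exists_point (E : A) hEnp
    have hk1 : k ≤ (Matrix.of fun i j => x'.toRingHom (P (cc i) (cc j))).rank := by
      apply le_rank_of_submatrix_unit _ f g
      apply isUnit_iff_ne_zero.mpr
      have h1 : x' (E : A) = ((Matrix.of fun i j =>
          x'.toRingHom (P (cc i) (cc j))).submatrix f g).det := by
        have h2 := RingHom.map_det (x'.toRingHom.comp B.val.toRingHom) (MB.submatrix f g)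
        exact h2
      rw [← h1]
      exact hx'E
    have hallA' : ∀ {s : ℕ} (dd : Fin s → A) (c0 : A),
        vecP P x'.toRingHom dd c0
          ∈ Submodule.span ℂ (vecP P x'.toRingHom dd '' Set.range aa) := by
      intro s dd c0
      exact vecP_mem_span P x'.toRingHom dd hadd hsmul hanti hleib _
        (by rw [haa]; exact Algebra.mem_top)
    have hstep1 : (Matrix.of fun i j => x'.toRingHom (P (cc i) (cc j))).rank
        ≤ (Matrix.of fun i j => x'.toRingHom (P (aa i) (cc j))).rank :=
      rank_step P x'.toRingHom cc aa cc (fun i => hallA' cc (cc i))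
    have hflip : (Matrix.of fun i j => x'.toRingHom (P (aa i) (cc j))).rank
        = (Matrix.of fun j i => x'.toRingHom (P (cc j) (aa i))).rank :=
      rank_flip P hanti x'.toRingHom aa cc
    have hstep2 : (Matrix.of fun j i => x'.toRingHom (P (cc j) (aa i))).rank
        ≤ (Matrix.of fun i j => x'.toRingHom (P (aa i) (aa j))).rank :=
      rank_step P x'.toRingHom cc aa aa (fun j => hallA' aa (cc j))
    have hk2 : k ≤ (Matrix.of fun i j : Fin n => x' (P (aa i) (aa j))).rank :=
      hk1.trans (hstep1.trans (hflip.le.trans hstep2))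
    refine hk2.trans (le_csSup hSAbdd ?_)
    exact ⟨x', rfl⟩
  exact le_antisymm dir1 dir2
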